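/- Let p and q be probability density functions on ℝ^d with respect to Lebesgue measure, with induced probability measures P and Q. For any measurable function D : ℝ^d → [0,1], the value V(D) = ∫ p(x)·log D(x) dx + ∫ q(x)·log(1 − D(x)) dx (taking values in the extended reals) is maximized by the discriminator D*(x) = p(x)/(p(x) + q(x)); that is, V(D) ≤ V(D*) for every measurable D : ℝ^d → [0,1]. -/

import Mathlib

open MeasureTheory
open scoped ENNReal

/-- The negative logarithm `t ↦ -log t` as an `ℝ≥0∞`-valued function on `[0,1]`,
with the convention `-log 0 = ∞` (i.e. `log 0 = -∞`). -/
noncomputable def negLog (t : ℝ) : ℝ≥0∞ :=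
  if t = 0 then ⊤ else ENNReal.ofReal (-Real.log t)

/-- The GAN value `V(D) = ∫ p x * log (D x) dx + ∫ q x * log (1 - D x) dx`,
valued in the extended reals.  Since `D x ∈ [0,1]`, both integrands are nonpositive
and the value is the negative of a `ℝ≥0∞`-valued lower integral; the conventions
`log 0 = -∞` and `0 * (-∞) = 0` are built in (as `0 * ∞ = 0` in `ℝ≥0∞`). -/
noncomputable def ganValue {d : ℕ} (p q : (Fin d → ℝ) → ℝ) (D : (Fin d → ℝ) → ℝ) : EReal :=
  -((((∫⁻ x, ENNReal.ofReal (p x) * negLog (D x))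
      + ∫⁻ x, ENNReal.ofReal (q x) * negLog (1 - D x) : ℝ≥0∞)) : EReal)

/-- The optimal discriminator `D* x = p x / (p x + q x)`, set to `1/2` where
`p x + q x = 0`. -/
noncomputable def optimalD {d : ℕ} (p q : (Fin d → ℝ) → ℝ) (x : Fin d → ℝ) : ℝ :=
  if p x + q x = 0 then 1 / 2 else p x / (p x + q x)

lemma measurable_negLog : Measurable negLog := by
  unfold negLog
  exact Measurable.ite (measurableSet_singleton 0) measurable_const
    (Real.measurable_log.neg.ennreal_ofReal)

lemma negLog_one : negLog 1 = 0 := by simp [negLog]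

/-- The key real inequality: `a log t + b log (1-t) ≤ a log (a/s) + b log (b/s)`. -/
lemma key_real {a b t : ℝ} (ha : 0 < a) (hb : 0 < b) (ht0 : 0 < t) (ht1 : t < 1) :
    a * (-Real.log (a / (a + b))) + b * (-Real.log (b / (a + b)))
      ≤ a * (-Real.log t) + b * (-Real.log (1 - t)) := by
  have hs : 0 < a + b := by linarith
  have h1t : (0:ℝ) < 1 - t := by linarith
  have h1 := Real.log_le_sub_one_of_pos (show 0 < t * (a + b) / a by positivity)
  have h2 := Real.log_le_sub_one_of_pos (div_pos (mul_pos h1t hs) hb)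
  rw [Real.log_div (by positivity) ha.ne', Real.log_mul ht0.ne' hs.ne'] at h1
  rw [Real.log_div (mul_pos h1t hs).ne' hb.ne', Real.log_mul h1t.ne' hs.ne'] at h2
  rw [Real.log_div ha.ne' hs.ne', Real.log_div hb.ne' hs.ne']
  have e1 : t * (a + b) / a - 1 = (t * (a + b) - a) / a := by field_simp
  have e2 : (1 - t) * (a + b) / b - 1 = ((1 - t) * (a + b) - b) / b := by field_simp
  rw [e1, le_div_iff₀ ha] at h1
  rw [e2, le_div_iff₀ hb] at h2
  nlinarith [h1, h2]

/-- Pointwise key inequality in `ℝ≥0∞`. -/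
lemma key_point (a b t : ℝ) (ha : 0 ≤ a) (hb : 0 ≤ b) (ht : t ∈ Set.Icc (0 : ℝ) 1) :
    ENNReal.ofReal a * negLog (if a + b = 0 then 1 / 2 else a / (a + b))
      + ENNReal.ofReal b * negLog (1 - if a + b = 0 then 1 / 2 else a / (a + b))
    ≤ ENNReal.ofReal a * negLog t + ENNReal.ofReal b * negLog (1 - t) := by
  obtain ⟨ht0, ht1⟩ := ht
  by_cases hs : a + b = 0
  · have ha0 : a = 0 := by linarith
    have hb0 : b = 0 := by linarith
    simp [ha0, hb0]
  · have hs' : 0 < a + b := lt_of_le_of_ne (by linarith) (Ne.symm hs)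
    simp only [if_neg hs]
    have h1ab : 1 - a / (a + b) = b / (a + b) := by field_simp; ring
    rw [h1ab]
    rcases eq_or_lt_of_le ha with ha0 | ha0
    · subst ha0
      have hb' : (0:ℝ) < b := by simpa using hs'
      simp [div_self hb'.ne', negLog_one]
    rcases eq_or_lt_of_le hb with hb0 | hb0
    · subst hb0
      have ha' : (0:ℝ) < a := by simpa using hs'
      simp [div_self ha'.ne', negLog_one]
    -- now a, b > 0
    have hda : (0:ℝ) < a / (a + b) := by positivity
    have hdb : (0:ℝ) < b / (a + b) := by positivity
    have hda1 : a / (a + b) ≤ 1 := by rw [div_le_one hs']; linarith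
    have hdb1 : b / (a + b) ≤ 1 := by rw [div_le_one hs']; linarith
    have lna : 0 ≤ -Real.log (a / (a + b)) := by
      simpa using Real.log_nonpos hda.le hda1
    have lnb : 0 ≤ -Real.log (b / (a + b)) := by
      simpa using Real.log_nonpos hdb.le hdb1
    have LHS : ENNReal.ofReal a * negLog (a / (a + b))
        + ENNReal.ofReal b * negLog (b / (a + b))
        = ENNReal.ofReal (a * (-Real.log (a / (a + b))) + b * (-Real.log (b / (a + b)))) := by
      rw [negLog, if_neg hda.ne', negLog, if_neg hdb.ne',
        ← ENNReal.ofReal_mul ha, ← ENNReal.ofReal_mul hb,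
        ← ENNReal.ofReal_add (by positivity) (by positivity)]
    rw [LHS]
    rcases eq_or_lt_of_le ht0 with h0 | h0
    · have : negLog t = ⊤ := by rw [negLog, if_pos h0.symm]
      rw [this, ENNReal.mul_top (by simpa [ENNReal.ofReal_eq_zero] using not_le.mpr ha0)]
      simp
    rcases eq_or_lt_of_le ht1 with h1 | h1
    · have : negLog (1 - t) = ⊤ := by rw [negLog, if_pos (by linarith)]
      rw [this, ENNReal.mul_top (by simpa [ENNReal.ofReal_eq_zero] using not_le.mpr hb0)]
      simp
    · have lnt : 0 ≤ -Real.log t := by simpa using Real.log_nonpos h0.le ht1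
      have lnt' : 0 ≤ -Real.log (1 - t) := by
        simpa using Real.log_nonpos (by linarith) (by linarith)
      rw [negLog, if_neg h0.ne', negLog, if_neg (by intro h; linarith [h] : (1:ℝ) - t ≠ 0),
        ← ENNReal.ofReal_mul ha, ← ENNReal.ofReal_mul hb,
        ← ENNReal.ofReal_add (by positivity) (by positivity)]
      exact ENNReal.ofReal_le_ofReal (key_real ha0 hb0 h0 h1)

theorem ganValue_le_optimal {d : ℕ} (p q : (Fin d → ℝ) → ℝ)
    (hp : Measurable p) (hp0 : ∀ x, 0 ≤ p x) (hp1 : ∫ x, p x = 1)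
    (hq : Measurable q) (hq0 : ∀ x, 0 ≤ q x) (hq1 : ∫ x, q x = 1) :
    ∀ D : (Fin d → ℝ) → ℝ, Measurable D → (∀ x, D x ∈ Set.Icc (0 : ℝ) 1) →
      ganValue p q D ≤ ganValue p q (optimalD p q) := by
  intro D hD hD01
  unfold ganValue
  rw [EReal.neg_le_neg_iff, EReal.coe_ennreal_le_coe_ennreal_iff]
  have hmeas1 : Measurable fun x => ENNReal.ofReal (p x) * negLog (optimalD p q x) := by
    apply (hp.ennreal_ofReal).mul
    apply measurable_negLog.comp
    exact Measurable.ite (((hp.add hq) (measurableSet_singleton 0))) measurable_const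
      (hp.div (hp.add hq))
  have hmeas2 : Measurable fun x => ENNReal.ofReal (p x) * negLog (D x) :=
    (hp.ennreal_ofReal).mul (measurable_negLog.comp hD)
  rw [← lintegral_add_left hmeas1, ← lintegral_add_left hmeas2]
  apply lintegral_mono
  intro x
  exact key_point (p x) (q x) (D x) (hp0 x) (hq0 x) (hD01 x)
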